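/- Let $w_1,\ldots,w_n:(\tau_0,\tau_0')\to(0,\infty)$ and $\nu\geq0$ be continuous, $l_1,\ldots,l_n\geq0$ with $\sum_i l_i>0$, and $k\in(0,1]$. Define $S=\{(c_1,\ldots,c_n)\in[0,\infty)^n:\sum_i c_i=k\text{ and }\sqrt{c_i}\int_{\tau_0}^{\tau_0'}w_i(\sum_j c_jw_j+\nu)^{-1/2}\geq l_i\ \forall i\}$. If $S$ is nonempty, all $l_i>0$, all elements of $S$ have all coordinates positive, and all relevant integrals are finite, then any maximizer $(c_1^M,\ldots,c_n^M)\in S$ of $(c_1,\ldots,c_n)\mapsto\sqrt{c_n}\int_{\tau_0}^{\tau_0'}w_n(\sum_j c_jw_j+\nu)^{-1/2}$ over $S$ satisfies equality in the first $n-1$ defining inequalities: $\sqrt{c_i^M}\int_{\tau_0}^{\tau_0'}w_i(\sum_j c_j^Mw_j+\nu)^{-1/2}=l_i$ for all $i\in\{1,\ldots,n-1\}$. -/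
import Mathlib


open MeasureTheory Set

theorem stmt_9 (n : ℕ) (τ0 τ0' : ℝ) (hτ : τ0 < τ0')
    (w : Fin (n + 1) → ℝ → ℝ) (ν : ℝ → ℝ)
    (hw : ∀ i, ContinuousOn (w i) (Ioo τ0 τ0')) (hν : ContinuousOn ν (Ioo τ0 τ0'))
    (hwp : ∀ i, ∀ τ ∈ Ioo τ0 τ0', 0 < w i τ) (hνp : ∀ τ ∈ Ioo τ0 τ0', 0 ≤ ν τ)
    (l : Fin (n + 1) → ℝ) (hl : ∀ i, 0 < l i)
    (k : ℝ) (hk : k ∈ Ioc (0:ℝ) 1)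
    (S : Set (Fin (n + 1) → ℝ))
    (hS : S = {c | (∀ i, 0 ≤ c i) ∧ (∑ i, c i = k) ∧
      ∀ i, l i ≤ Real.sqrt (c i) *
        (∫ τ in Ioo τ0 τ0', w i τ * (Real.sqrt ((∑ j, c j * w j τ) + ν τ))⁻¹)})
    (hSne : S.Nonempty)
    (hSpos : ∀ c ∈ S, ∀ i, 0 < c i)
    (hfin : ∀ c : Fin (n + 1) → ℝ, (∀ i, 0 ≤ c i) → (∑ i, c i = k) →
      ∀ i, IntegrableOn
        (fun τ => w i τ * (Real.sqrt ((∑ j, c j * w j τ) + ν τ))⁻¹) (Ioo τ0 τ0'))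
    (cM : Fin (n + 1) → ℝ) (hcM : cM ∈ S)
    (hmax : ∀ c ∈ S,
      Real.sqrt (c (Fin.last n)) *
        (∫ τ in Ioo τ0 τ0', w (Fin.last n) τ * (Real.sqrt ((∑ j, c j * w j τ) + ν τ))⁻¹) ≤
      Real.sqrt (cM (Fin.last n)) *
        (∫ τ in Ioo τ0 τ0', w (Fin.last n) τ * (Real.sqrt ((∑ j, cM j * w j τ) + ν τ))⁻¹)) :
    ∀ i, i ≠ Fin.last n →
      Real.sqrt (cM i) *
        (∫ τ in Ioo τ0 τ0', w i τ * (Real.sqrt ((∑ j, cM j * w j τ) + ν τ))⁻¹) = l i := by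
  intro i hi
  obtain ⟨hMnn, hMsum, hMineq⟩ : (∀ j, 0 ≤ cM j) ∧ (∑ j, cM j = k) ∧ _ := hS ▸ hcM
  have hMpos := hSpos cM hcM
  by_contra hne
  have hlt : l i < Real.sqrt (cM i) *
      (∫ τ in Ioo τ0 τ0', w i τ * (Real.sqrt ((∑ j, cM j * w j τ) + ν τ))⁻¹) :=
    (hMineq i).lt_of_ne (fun e => hne e.symm)
  set ε : ℝ := k - cM i with hε
  have hεpos : 0 < ε := by
    have h1 : cM i + ∑ j ∈ Finset.univ.erase i, cM j = k := by
      rw [Finset.add_sum_erase _ _ (Finset.mem_univ i)] at *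
      exact hMsum
    have h2 : cM (Fin.last n) ≤ ∑ j ∈ Finset.univ.erase i, cM j :=
      Finset.single_le_sum (fun j _ => hMnn j)
        (Finset.mem_erase.2 ⟨Ne.symm hi, Finset.mem_univ _⟩)
    have := hMpos (Fin.last n)
    simp only [hε]; linarith
  -- abbreviations
  set II : (Fin (n+1) → ℝ) → Fin (n+1) → ℝ := fun c j =>
    ∫ τ in Ioo τ0 τ0', w j τ * (Real.sqrt ((∑ j', c j' * w j' τ) + ν τ))⁻¹ with hII
  -- the perturbed family
  set c' : ℝ → Fin (n+1) → ℝ := fun δ j =>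
    (1+δ) * cM j - (if j = i then δ * k else 0) with hc'
  -- choose δ
  have hIInn : 0 ≤ II cM i := by
    apply setIntegral_nonneg measurableSet_Ioo
    intro τ hτ'
    have := (hwp i τ hτ').le
    positivity
  have hcont : ContinuousAt
      (fun δ : ℝ => Real.sqrt (cM i - δ * ε) * (Real.sqrt (1+δ))⁻¹ * II cM i) 0 := by
    apply ContinuousAt.mul
    apply ContinuousAt.mul
    · exact Real.continuous_sqrt.continuousAt.comp (by fun_prop)
    · apply ContinuousAt.inv₀
      · exact Real.continuous_sqrt.continuousAt.comp (by fun_prop)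
      · simp
    · exact continuousAt_const
  have hev1 : ∀ᶠ δ in nhds (0:ℝ), l i <
      Real.sqrt (cM i - δ * ε) * (Real.sqrt (1+δ))⁻¹ * II cM i := by
    apply hcont.eventually_const_lt
    simpa using hlt
  have hev2 : ∀ᶠ δ in nhds (0:ℝ), δ * ε < cM i := by
    have : ContinuousAt (fun δ : ℝ => δ * ε) 0 := by fun_prop
    apply this.eventually_lt continuousAt_const
    simpa using hMpos i
  obtain ⟨δ, ⟨hφ, hδk⟩, hδpos⟩ :=
    (((hev1.and hev2).filter_mono nhdsWithin_le_nhds).and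
      (eventually_mem_nhdsWithin (s := Ioi (0:ℝ)))).exists
  rw [mem_Ioi] at hδpos
  -- basic facts about c' δ
  have hc'i : c' δ i = cM i - δ * ε := by simp [hc', hε]; ring
  have hc'j : ∀ j, j ≠ i → c' δ j = (1+δ) * cM j := by
    intro j hj; simp [hc', hj]
  have hc'pos : ∀ j, 0 < c' δ j := by
    intro j
    by_cases hj : j = i
    · subst hj; rw [hc'i]; linarith
    · rw [hc'j j hj]; have := hMpos j; positivity
  have hc'nn : ∀ j, 0 ≤ c' δ j := fun j => (hc'pos j).le
  have hsum' : ∑ j, c' δ j = k := by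
    simp only [hc']
    rw [Finset.sum_sub_distrib, ← Finset.mul_sum, hMsum, Finset.sum_ite_eq']
    simp; ring
  have hsumw : ∀ τ, ∑ j, c' δ j * w j τ
      = (1+δ)*(∑ j, cM j * w j τ) - δ*(k * w i τ) := by
    intro τ
    simp only [hc', sub_mul, ite_mul, zero_mul]
    rw [Finset.sum_sub_distrib, Finset.sum_ite_eq']
    simp [Finset.mul_sum, mul_assoc]
  have hD'pos : ∀ τ ∈ Ioo τ0 τ0', 0 < (∑ j, c' δ j * w j τ) + ν τ := by
    intro τ hτ'
    have h1 : c' δ i * w i τ ≤ ∑ j, c' δ j * w j τ :=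
      Finset.single_le_sum (fun j _ => mul_nonneg (hc'nn j) (hwp j τ hτ').le)
        (Finset.mem_univ i)
    have h2 := mul_pos (hc'pos i) (hwp i τ hτ')
    have := hνp τ hτ'
    linarith
  have hDpos : ∀ τ ∈ Ioo τ0 τ0', 0 < (∑ j, cM j * w j τ) + ν τ := by
    intro τ hτ'
    have h1 : cM i * w i τ ≤ ∑ j, cM j * w j τ :=
      Finset.single_le_sum (fun j _ => mul_nonneg (hMnn j) (hwp j τ hτ').le)
        (Finset.mem_univ i)
    have h2 := mul_pos (hMpos i) (hwp i τ hτ')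
    have := hνp τ hτ'
    linarith
  have hDlt : ∀ τ ∈ Ioo τ0 τ0', (∑ j, c' δ j * w j τ) + ν τ
      < (1+δ)*((∑ j, cM j * w j τ) + ν τ) := by
    intro τ hτ'
    rw [hsumw τ]
    have h1 := mul_pos hδpos (mul_pos hk.1 (hwp i τ hτ'))
    have h2 := mul_nonneg hδpos.le (hνp τ hτ')
    nlinarith [hνp τ hτ']
  -- pointwise comparison of integrands
  have hpt : ∀ j, ∀ τ ∈ Ioo τ0 τ0',
      (Real.sqrt (1+δ))⁻¹ * (w j τ * (Real.sqrt ((∑ j', cM j' * w j' τ) + ν τ))⁻¹)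
      < w j τ * (Real.sqrt ((∑ j', c' δ j' * w j' τ) + ν τ))⁻¹ := by
    intro j τ hτ'
    have hs' : 0 < Real.sqrt ((∑ j', c' δ j' * w j' τ) + ν τ) :=
      Real.sqrt_pos.2 (hD'pos τ hτ')
    have hslt : Real.sqrt ((∑ j', c' δ j' * w j' τ) + ν τ)
        < Real.sqrt ((1+δ)*((∑ j', cM j' * w j' τ) + ν τ)) :=
      Real.sqrt_lt_sqrt (hD'pos τ hτ').le (hDlt τ hτ')
    have hinv : (Real.sqrt ((1+δ)*((∑ j', cM j' * w j' τ) + ν τ)))⁻¹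
        < (Real.sqrt ((∑ j', c' δ j' * w j' τ) + ν τ))⁻¹ :=
      inv_strictAnti₀ hs' hslt
    have hmulsp : Real.sqrt ((1+δ)*((∑ j', cM j' * w j' τ) + ν τ))
        = Real.sqrt (1+δ) * Real.sqrt ((∑ j', cM j' * w j' τ) + ν τ) :=
      Real.sqrt_mul (by linarith) _
    rw [hmulsp, mul_inv] at hinv
    calc (Real.sqrt (1+δ))⁻¹ * (w j τ * (Real.sqrt ((∑ j', cM j' * w j' τ) + ν τ))⁻¹)
        = w j τ * ((Real.sqrt (1+δ))⁻¹ * (Real.sqrt ((∑ j', cM j' * w j' τ) + ν τ))⁻¹) := by ring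
      _ < w j τ * (Real.sqrt ((∑ j', c' δ j' * w j' τ) + ν τ))⁻¹ :=
          mul_lt_mul_of_pos_left hinv (hwp j τ hτ')
  -- integrability
  have hint' := hfin (c' δ) hc'nn hsum'
  have hintM := hfin cM hMnn hMsum
  -- integral inequalities
  have hIle : ∀ j, (Real.sqrt (1+δ))⁻¹ * II cM j ≤ II (c' δ) j := by
    intro j
    show (Real.sqrt (1+δ))⁻¹ *
        (∫ τ in Ioo τ0 τ0', w j τ * (Real.sqrt ((∑ j', cM j' * w j' τ) + ν τ))⁻¹)
      ≤ ∫ τ in Ioo τ0 τ0', w j τ * (Real.sqrt ((∑ j', c' δ j' * w j' τ) + ν τ))⁻¹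
    rw [← integral_const_mul]
    exact setIntegral_mono_on ((hintM j).const_mul _) (hint' j) measurableSet_Ioo
      (fun τ hτ' => (hpt j τ hτ').le)
  have hIlt : (Real.sqrt (1+δ))⁻¹ * II cM (Fin.last n) < II (c' δ) (Fin.last n) := by
    show (Real.sqrt (1+δ))⁻¹ *
        (∫ τ in Ioo τ0 τ0', w (Fin.last n) τ * (Real.sqrt ((∑ j', cM j' * w j' τ) + ν τ))⁻¹)
      < ∫ τ in Ioo τ0 τ0', w (Fin.last n) τ * (Real.sqrt ((∑ j', c' δ j' * w j' τ) + ν τ))⁻¹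
    rw [← integral_const_mul]
    set f := fun τ => (Real.sqrt (1+δ))⁻¹ *
      (w (Fin.last n) τ * (Real.sqrt ((∑ j', cM j' * w j' τ) + ν τ))⁻¹) with hf
    set g := fun τ => w (Fin.last n) τ *
      (Real.sqrt ((∑ j', c' δ j' * w j' τ) + ν τ))⁻¹ with hg
    have hfint : IntegrableOn f (Ioo τ0 τ0') := (hintM (Fin.last n)).const_mul _
    have hgint : IntegrableOn g (Ioo τ0 τ0') := hint' (Fin.last n)
    have hsub : 0 < ∫ τ in Ioo τ0 τ0', (g τ - f τ) := by
      rw [setIntegral_pos_iff_support_of_nonneg_ae]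
      · have hss : Ioo τ0 τ0' ⊆ Function.support (fun τ => g τ - f τ) := by
          intro τ hτ'
          exact sub_ne_zero.2 (hpt (Fin.last n) τ hτ').ne'
        calc (0:ENNReal) < volume (Ioo τ0 τ0') := by
              rw [Real.volume_Ioo]; exact ENNReal.ofReal_pos.2 (by linarith)
          _ ≤ volume (Function.support (fun τ => g τ - f τ) ∩ Ioo τ0 τ0') :=
              measure_mono (fun τ hτ' => ⟨hss hτ', hτ'⟩)
      · exact (ae_restrict_mem measurableSet_Ioo).mono
          (fun τ hτ' => sub_nonneg.2 (hpt (Fin.last n) τ hτ').le)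
      · exact hgint.sub hfint
    rw [integral_sub hgint hfint] at hsub
    linarith
  -- membership of the perturbed point
  have hmem : c' δ ∈ S := by
    rw [hS]
    refine ⟨hc'nn, hsum', ?_⟩
    intro j
    show l j ≤ Real.sqrt (c' δ j) * II (c' δ) j
    by_cases hj : j = i
    · subst hj
      rw [hc'i]
      refine le_of_lt ?_
      calc l j < Real.sqrt (cM j - δ * ε) * (Real.sqrt (1+δ))⁻¹ * II cM j := hφ
        _ = Real.sqrt (cM j - δ * ε) * ((Real.sqrt (1+δ))⁻¹ * II cM j) := mul_assoc _ _ _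
        _ ≤ Real.sqrt (cM j - δ * ε) * II (c' δ) j :=
            mul_le_mul_of_nonneg_left (hIle j) (Real.sqrt_nonneg _)
    · rw [hc'j j hj]
      have h1 : Real.sqrt ((1+δ) * cM j) = Real.sqrt (1+δ) * Real.sqrt (cM j) :=
        Real.sqrt_mul (by linarith) _
      have h2 : Real.sqrt (1+δ) * (Real.sqrt (1+δ))⁻¹ = 1 :=
        mul_inv_cancel₀ (ne_of_gt (Real.sqrt_pos.2 (by linarith)))
      calc l j ≤ Real.sqrt (cM j) * II cM j := hMineq j
        _ = Real.sqrt (1+δ) * Real.sqrt (cM j) * ((Real.sqrt (1+δ))⁻¹ * II cM j) := by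
            rw [mul_mul_mul_comm, h2, one_mul]
        _ ≤ Real.sqrt (1+δ) * Real.sqrt (cM j) * II (c' δ) j :=
            mul_le_mul_of_nonneg_left (hIle j) (by positivity)
        _ = Real.sqrt ((1+δ) * cM j) * II (c' δ) j := by rw [h1]
  -- contradiction with maximality
  have hcontr := hmax (c' δ) hmem
  have hgt : Real.sqrt (cM (Fin.last n)) * II cM (Fin.last n)
      < Real.sqrt (c' δ (Fin.last n)) * II (c' δ) (Fin.last n) := by
    rw [hc'j (Fin.last n) (Ne.symm hi)]
    have h1 : Real.sqrt ((1+δ) * cM (Fin.last n))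
        = Real.sqrt (1+δ) * Real.sqrt (cM (Fin.last n)) :=
      Real.sqrt_mul (by linarith) _
    have h2 : Real.sqrt (1+δ) * (Real.sqrt (1+δ))⁻¹ = 1 :=
      mul_inv_cancel₀ (ne_of_gt (Real.sqrt_pos.2 (by linarith)))
    have h3 : 0 < Real.sqrt (1+δ) * Real.sqrt (cM (Fin.last n)) := by
      have := hMpos (Fin.last n)
      have : 0 < Real.sqrt (cM (Fin.last n)) := Real.sqrt_pos.2 this
      have h4 : 0 < Real.sqrt (1+δ) := Real.sqrt_pos.2 (by linarith)
      positivity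
    calc Real.sqrt (cM (Fin.last n)) * II cM (Fin.last n)
        = Real.sqrt (1+δ) * Real.sqrt (cM (Fin.last n)) *
            ((Real.sqrt (1+δ))⁻¹ * II cM (Fin.last n)) := by
          rw [mul_mul_mul_comm, h2, one_mul]
      _ < Real.sqrt (1+δ) * Real.sqrt (cM (Fin.last n)) * II (c' δ) (Fin.last n) :=
          mul_lt_mul_of_pos_left hIlt h3
      _ = Real.sqrt ((1+δ) * cM (Fin.last n)) * II (c' δ) (Fin.last n) := by rw [h1]
  exact absurd hcontr (not_le.2 hgt)
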